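/- Let G and H be groups acting on sets X and Y respectively, let K be a groupoid, let υ : K → G⋉X be an equivalence of categories, and let φ : K → H⋉Y be any functor. Then there exist a (G×H)-set Z, an equivariant map ω = (pr_G, w) : (G×H)⋉Z → G⋉X whose group homomorphism is the projection pr_G : G×H → G, an equivariant map ψ = (pr_H, u) : (G×H)⋉Z → H⋉Y whose group homomorphism is the projection pr_H : G×H → H, and a functor θ : K → (G×H)⋉Z which is an equivalence of categories, such that ω ∘ θ = υ and ψ ∘ θ = φ as functors. Consequently ω is fully faithful and essentially surjective. -/

import Mathlib

open CategoryTheory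

/-- An equivariant map `(φ, f) : G⋉X → H⋉Y` between translation groupoids is *fully
faithful* if for all `x, x' ∈ X` and `h ∈ H` with `h • f x = f x'` there is a unique
`g ∈ G` with `φ g = h` and `g • x = x'`. -/
def IsFullyFaithful {G H : Type*} [Group G] [Group H] {X Y : Type*}
    [MulAction G X] [MulAction H Y] (φ : G →* H) (f : X → Y) : Prop :=
  ∀ (x x' : X) (h : H), h • f x = f x' → ∃! g : G, φ g = h ∧ g • x = x'

/-- An equivariant map with underlying map `f : X → Y` into an `H`-set `Y` is
*essentially surjective* if every `y ∈ Y` is of the form `h • f x`. -/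
def IsEssSurj {H : Type*} [Group H] {X Y : Type*} [MulAction H Y] (f : X → Y) : Prop :=
  ∀ y : Y, ∃ (x : X) (h : H), h • f x = y

/-- The translation groupoid `G⋉X` of a `G`-set `X`: objects are the elements of `X`. -/
def TransGpd (G : Type*) [Group G] (X : Type*) [MulAction G X] : Type _ := X

instance (G : Type*) [Group G] (X : Type*) [MulAction G X] :
    MulAction G (TransGpd G X) :=
  inferInstanceAs (MulAction G X)

/-- Morphisms `x → y` in `G⋉X` are the `g ∈ G` with `g • x = y`; composition is group
multiplication. -/
instance TransGpd.instCategory (G : Type*) [Group G] (X : Type*) [MulAction G X] :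
    Category (TransGpd G X) where
  Hom x y := { g : G // g • x = y }
  id x := ⟨1, one_smul G x⟩
  comp m m' := ⟨m'.1 * m.1, by rw [mul_smul, m.2, m'.2]⟩
  id_comp m := Subtype.ext (mul_one m.1)
  comp_id m := Subtype.ext (one_mul m.1)
  assoc m m' m'' := Subtype.ext (mul_assoc m''.1 m'.1 m.1).symm

/-- The functor `G⋉X → H⋉Y` induced by an equivariant map `(φ, f)`. -/
def eqvFunctor {G H : Type*} [Group G] [Group H] {X Y : Type*}
    [MulAction G X] [MulAction H Y] (φ : G →* H) (f : X → Y)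
    (hf : ∀ (g : G) (x : X), f (g • x) = φ g • f x) :
    TransGpd G X ⥤ TransGpd H Y where
  obj x := f x
  map m := ⟨φ m.1, by exact (hf m.1 _).symm.trans (congrArg f m.2)⟩
  map_id x := Subtype.ext (map_one φ)
  map_comp m m' := Subtype.ext (map_mul φ _ _)

/-- A replacement of a generalized map, given by a span of functors
`G⋉X ←υ− K −φ→ H⋉Y` whose left leg is an equivalence, by a span of equivariant maps
`G⋉X ←ω− (G×H)⋉Z −ψ→ H⋉Y`: a `(G×H)`-set `Z`, equivariant maps
`ω = (pr_G, w) : (G×H)⋉Z → G⋉X` and `ψ = (pr_H, u) : (G×H)⋉Z → H⋉Y` whose group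
homomorphisms are the two projections of `G×H`, and an equivalence of categories
`θ : K → (G×H)⋉Z` with `ω ∘ θ = υ` and `ψ ∘ θ = φ`; moreover `ω` is fully faithful
and essentially surjective. -/
structure Replacement {G H : Type} [Group G] [Group H] {X Y : Type}
    [MulAction G X] [MulAction H Y] {K : Type} [Groupoid K]
    (υ : K ⥤ TransGpd G X) (φ : K ⥤ TransGpd H Y) where
  /-- the underlying set of the replacing translation groupoid -/
  Z : Type
  /-- the action of `G × H` on `Z` -/
  [act : MulAction (G × H) Z]
  /-- the underlying map of `ω` -/
  w : Z → X
  /-- `w` is equivariant along the projection `pr_G : G × H → G` -/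
  hw : ∀ (p : G × H) (z : Z), w (p • z) = MonoidHom.fst G H p • w z
  /-- the underlying map of `ψ` -/
  u : Z → Y
  /-- `u` is equivariant along the projection `pr_H : G × H → H` -/
  hu : ∀ (p : G × H) (z : Z), u (p • z) = MonoidHom.snd G H p • u z
  /-- the comparison functor `θ : K → (G×H)⋉Z` -/
  θ : K ⥤ TransGpd (G × H) Z
  /-- `θ` is an equivalence of categories -/
  θ_equiv : θ.IsEquivalence
  /-- `ω ∘ θ = υ` as functors -/
  comm_w : θ ⋙ eqvFunctor (MonoidHom.fst G H) w hw = υ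
  /-- `ψ ∘ θ = φ` as functors -/
  comm_u : θ ⋙ eqvFunctor (MonoidHom.snd G H) u hu = φ
  /-- consequently, the equivariant map `ω` is fully faithful -/
  ω_ff : IsFullyFaithful (MonoidHom.fst G H) w
  /-- and essentially surjective -/
  ω_es : IsEssSurj (H := G) w

section Construction

variable {G H : Type} [Group G] [Group H] {X Y : Type}
    [MulAction G X] [MulAction H Y] {K : Type} [Groupoid K]
    (υ : K ⥤ TransGpd G X) (φ : K ⥤ TransGpd H Y)

lemma TransGpd.comp_val {G X : Type} [Group G] [MulAction G X]
    {x y z : TransGpd G X} (f : x ⟶ y) (g : y ⟶ z) : (f ≫ g).1 = g.1 * f.1 := rfl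

lemma TransGpd.id_val {G X : Type} [Group G] [MulAction G X]
    (x : TransGpd G X) : (𝟙 x : x ⟶ x).1 = 1 := rfl

lemma TransGpd.eqToHom_val {G X : Type} [Group G] [MulAction G X]
    {x y : TransGpd G X} (h : x = y) : (eqToHom h).1 = 1 := by subst h; rfl

/-- Any hom in a translation groupoid is an iso. -/
def TransGpd.isoOfHom {G X : Type} [Group G] [MulAction G X]
    {x y : TransGpd G X} (f : x ⟶ y) : x ≅ y where
  hom := f
  inv := ⟨f.1⁻¹, inv_smul_eq_iff.mpr f.2.symm⟩
  hom_inv_id := Subtype.ext (inv_mul_cancel f.1)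
  inv_hom_id := Subtype.ext (mul_inv_cancel f.1)

lemma map_inv_val {k k' : K} (m : k ⟶ k') :
    (υ.map (Groupoid.inv m)).1 = (υ.map m).1⁻¹ := by
  have h := congrArg (fun f => Subtype.val (υ.map f)) (Groupoid.comp_inv m)
  simp only [υ.map_comp, υ.map_id, TransGpd.comp_val, TransGpd.id_val] at h
  exact eq_inv_of_mul_eq_one_left h

/-- The identification relation on `G × H × K`. -/
def repSetoid : Setoid (G × H × K) where
  r a b := ∃ m : a.2.2 ⟶ b.2.2, a.1 = b.1 * (υ.map m).1 ∧ a.2.1 = b.2.1 * (φ.map m).1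
  iseqv := by
    constructor
    · intro a
      exact ⟨𝟙 a.2.2, by simp [υ.map_id, TransGpd.id_val], by simp [φ.map_id, TransGpd.id_val]⟩
    · rintro a b ⟨m, h1, h2⟩
      refine ⟨Groupoid.inv m, ?_, ?_⟩
      · rw [map_inv_val, h1, mul_assoc, mul_inv_cancel, mul_one]
      · rw [map_inv_val, h2, mul_assoc, mul_inv_cancel, mul_one]
    · rintro a b c ⟨m, h1, h2⟩ ⟨m', h1', h2'⟩
      refine ⟨m ≫ m', ?_, ?_⟩
      · rw [υ.map_comp, TransGpd.comp_val, h1, h1', mul_assoc]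
      · rw [φ.map_comp, TransGpd.comp_val, h2, h2', mul_assoc]

/-- The underlying set of the replacement translation groupoid. -/
abbrev ZRep : Type := Quotient (repSetoid υ φ)

instance zAction : MulAction (G × H) (ZRep υ φ) where
  smul p := Quotient.map (fun a => (p.1 * a.1, p.2 * a.2.1, a.2.2))
    (by rintro a b ⟨m, h1, h2⟩
        exact ⟨m, by dsimp only; rw [h1, mul_assoc], by dsimp only; rw [h2, mul_assoc]⟩)
  one_smul := by
    rintro ⟨a⟩
    exact congrArg (Quotient.mk _) (by simp)
  mul_smul p q := by
    rintro ⟨a⟩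
    exact congrArg (Quotient.mk _) (by simp [mul_assoc])

lemma zsmul_mk (p : G × H) (a : G × H × K) :
    p • (Quotient.mk (repSetoid υ φ) a) =
      Quotient.mk (repSetoid υ φ) (p.1 * a.1, p.2 * a.2.1, a.2.2) := rfl

/-- The underlying map of `ω`. -/
def wRep : ZRep υ φ → X :=
  Quotient.lift (fun a => a.1 • υ.obj a.2.2)
    (by rintro a b ⟨m, h1, _⟩
        rw [h1, mul_smul, (υ.map m).2])

/-- The underlying map of `ψ`. -/
def uRep : ZRep υ φ → Y :=
  Quotient.lift (fun a => a.2.1 • φ.obj a.2.2)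
    (by rintro a b ⟨m, _, h2⟩
        rw [h2, mul_smul, (φ.map m).2])

lemma hwRep : ∀ (p : G × H) (z : ZRep υ φ),
    wRep υ φ (p • z) = MonoidHom.fst G H p • wRep υ φ z := by
  rintro p ⟨a⟩
  exact mul_smul p.1 a.1 (υ.obj a.2.2)

lemma huRep : ∀ (p : G × H) (z : ZRep υ φ),
    uRep υ φ (p • z) = MonoidHom.snd G H p • uRep υ φ z := by
  rintro p ⟨a⟩
  exact mul_smul p.2 a.2.1 (φ.obj a.2.2)

/-- The comparison functor `θ`. -/
def θRep : K ⥤ TransGpd (G × H) (ZRep υ φ) where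
  obj k := Quotient.mk _ (1, 1, k)
  map {k k'} m := ⟨((υ.map m).1, (φ.map m).1),
    Quotient.sound ⟨m, by simp, by simp⟩⟩
  map_id k := Subtype.ext (by
    simp only [υ.map_id, φ.map_id, TransGpd.id_val]; rfl)
  map_comp m m' := Subtype.ext (by
    simp only [υ.map_comp, φ.map_comp, TransGpd.comp_val]; rfl)

end Construction

/-- Let `G` and `H` be groups acting on sets `X` and `Y`, let `K` be a groupoid,
`υ : K → G⋉X` an equivalence of categories and `φ : K → H⋉Y` any functor.  Then the
generalized map `G⋉X ←υ− K −φ→ H⋉Y` can be replaced by a span of equivariant maps out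
of a translation groupoid for the group `G × H`: there are a `(G×H)`-set `Z`,
equivariant maps `ω = (pr_G, w) : (G×H)⋉Z → G⋉X`, `ψ = (pr_H, u) : (G×H)⋉Z → H⋉Y` and
an equivalence of categories `θ : K → (G×H)⋉Z` with `ω ∘ θ = υ` and `ψ ∘ θ = φ`;
consequently `ω` is fully faithful and essentially surjective. -/
theorem stmt_13 {G H : Type} [Group G] [Group H] {X Y : Type}
    [MulAction G X] [MulAction H Y] {K : Type} [Groupoid K]
    (υ : K ⥤ TransGpd G X) (φ : K ⥤ TransGpd H Y) (hυ : υ.IsEquivalence) :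
    Nonempty (Replacement υ φ) := by
  haveI := hυ
  -- `θ` is faithful
  have hfaith : (θRep υ φ).Faithful := by
    constructor
    intro k k' m m' h
    have h1 : (υ.map m).1 = (υ.map m').1 :=
      congrArg Prod.fst (congrArg Subtype.val h)
    exact υ.map_injective (Subtype.ext h1)
  -- `θ` is full
  have hfull : (θRep υ φ).Full := by
    constructor
    rintro k k' ⟨⟨a, b⟩, hf⟩
    obtain ⟨m, h1, h2⟩ := Quotient.exact hf
    dsimp only at h1 h2
    refine ⟨m, Subtype.ext (Prod.ext ?_ ?_)⟩
    · simpa [θRep] using h1.symm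
    · simpa [θRep] using h2.symm
  -- `θ` is essentially surjective
  have hes : (θRep υ φ).EssSurj := by
    constructor
    intro z
    refine Quotient.inductionOn z fun a => ⟨a.2.2, ⟨TransGpd.isoOfHom
      ⟨(a.1, a.2.1), congrArg (Quotient.mk _) ?_⟩⟩⟩
    simp
  refine ⟨⟨ZRep υ φ, wRep υ φ, hwRep υ φ, uRep υ φ, huRep υ φ, θRep υ φ,
    { faithful := hfaith, full := hfull, essSurj := hes }, ?_, ?_, ?_, ?_⟩⟩
  · -- comm_w
    refine CategoryTheory.Functor.ext (fun k => ?_) (fun k k' m => ?_)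
    · exact one_smul G (υ.obj k)
    · refine Subtype.ext ?_
      simp [TransGpd.comp_val, TransGpd.eqToHom_val, eqvFunctor, θRep]
      erw [TransGpd.comp_val, TransGpd.comp_val, TransGpd.eqToHom_val, TransGpd.eqToHom_val, mul_one, one_mul]
  · -- comm_u
    refine CategoryTheory.Functor.ext (fun k => ?_) (fun k k' m => ?_)
    · exact one_smul H (φ.obj k)
    · refine Subtype.ext ?_
      simp [TransGpd.comp_val, TransGpd.eqToHom_val, eqvFunctor, θRep]
      erw [TransGpd.comp_val, TransGpd.comp_val, TransGpd.eqToHom_val, TransGpd.eqToHom_val, mul_one, one_mul]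
  · -- ω_ff
    intro z z' g
    refine Quotient.inductionOn₂ z z' fun a b hg => ?_
    change g • (a.1 • υ.obj a.2.2) = b.1 • υ.obj b.2.2 at hg
    have hc : (b.1⁻¹ * g * a.1) • υ.obj a.2.2 = υ.obj b.2.2 := by
      rw [mul_smul, mul_smul, hg, inv_smul_smul]
    obtain ⟨m, hm⟩ := υ.map_surjective (⟨b.1⁻¹ * g * a.1, hc⟩ :
      υ.obj a.2.2 ⟶ υ.obj b.2.2)
    have hmv : (υ.map m).1 = b.1⁻¹ * g * a.1 := congrArg Subtype.val hm
    refine ⟨(g, b.2.1 * (φ.map m).1 * a.2.1⁻¹), ⟨rfl, ?_⟩, ?_⟩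
    · refine Quotient.sound ⟨m, ?_, ?_⟩
      · dsimp only; rw [hmv]; group
      · dsimp only; group
    · rintro ⟨g', h'⟩ ⟨hfst, hact⟩
      have hg' : g' = g := hfst
      obtain ⟨m', h1', h2'⟩ := Quotient.exact hact
      dsimp only at h1' h2'
      have hm'v : (υ.map m').1 = b.1⁻¹ * g * a.1 := by
        have h3 := congrArg (fun t => b.1⁻¹ * t) h1'
        simp only [inv_mul_cancel_left] at h3
        rw [← h3, hg', mul_assoc]
      have hmm : m' = m := υ.map_injective (Subtype.ext (hm'v.trans hmv.symm))
      have hh' : h' = b.2.1 * (φ.map m).1 * a.2.1⁻¹ := by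
        rw [← hmm, eq_mul_inv_iff_mul_eq, h2']
      exact Prod.ext hg' hh'
  · -- ω_es
    intro x
    refine ⟨Quotient.mk _ (1, 1, υ.objPreimage x), (υ.objObjPreimageIso x).hom.1, ?_⟩
    show (υ.objObjPreimageIso x).hom.1 • ((1 : G) • υ.obj (υ.objPreimage x)) = x
    rw [one_smul]
    exact (υ.objObjPreimageIso x).hom.2
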